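/- arXiv:1906.00350 — 6 statements merged into one kernel-verified Lean document; each statement's English description precedes it below -/
import Mathlib

section
/- Let x_1, ..., x_{n+1} be points in [0,1]^p with p ≥ 2, and let r_i be the distance from x_i to its nearest neighbor among the other points. Then (1/(n+1)) ∑_i r_i^2 ≤ (2^p (1+√p)^p / ((n+1) V_p))^{2/p}, where V_p is the volume of the unit p-ball. -/
set_option maxHeartbeats 1000000


open MeasureTheory

/-- Mean squared nearest-neighbor distance bound for points in the unit cube. -/
theorem stmt_1 (p n : ℕ) (hp : 2 ≤ p) (hn : 1 ≤ n)
    (x : Fin (n + 1) → EuclideanSpace ℝ (Fin p))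
    (hx : ∀ i, ∀ k, x i k ∈ Set.Icc (0 : ℝ) 1)
    (r : Fin (n + 1) → ℝ)
    (hr : ∀ i, r i = ⨅ j : {j : Fin (n + 1) // j ≠ i}, dist (x j) (x i)) :
    (1 / (n + 1 : ℝ)) * ∑ i, (r i) ^ 2
      ≤ (2 ^ p * (1 + Real.sqrt p) ^ p /
          ((n + 1 : ℝ) * (volume (Metric.ball (0 : EuclideanSpace ℝ (Fin p)) 1)).toReal))
          ^ ((2 : ℝ) / p) := by
  have hp0 : 0 < p := by omega
  have hpR : (0:ℝ) < p := by exact_mod_cast hp0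
  haveI : Nonempty (Fin p) := ⟨⟨0, hp0⟩⟩
  haveI : Nontrivial (Fin (n+1)) := ⟨⟨0, 1, by simp [Fin.ext_iff, Nat.mod_eq_of_lt (by omega : 1 < n+1)]⟩⟩
  set VE := volume (Metric.ball (0 : EuclideanSpace ℝ (Fin p)) 1) with hVE
  set V := VE.toReal with hV
  have hVEne : VE ≠ ⊤ := measure_ball_lt_top.ne
  have hVE0 : VE ≠ 0 := (Metric.measure_ball_pos _ _ (by norm_num)).ne'
  have hVpos : 0 < V := ENNReal.toReal_pos hVE0 hVEne
  -- basic facts about r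
  have hrle : ∀ i j : Fin (n+1), j ≠ i → r i ≤ dist (x j) (x i) := by
    intro i j hj
    rw [hr i]
    apply ciInf_le (f := fun j : {j : Fin (n+1) // j ≠ i} => dist (x j) (x i)) ?_ ⟨j, hj⟩
    exact ⟨0, by rintro _ ⟨j, rfl⟩; exact dist_nonneg⟩
  have hr0 : ∀ i, 0 ≤ r i := by
    intro i; rw [hr i]; exact Real.iInf_nonneg (f := fun j : {j : Fin (n+1) // j ≠ i} => dist (x j) (x i)) fun j => dist_nonneg
  have hdist : ∀ i j : Fin (n+1), dist (x i) (x j) ≤ Real.sqrt p := by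
    intro i j
    rw [EuclideanSpace.dist_eq]
    simp only [Real.dist_eq, sq_abs]
    apply Real.sqrt_le_sqrt
    calc ∑ k, (x i k - x j k)^2 ≤ ∑ k : Fin p, 1 := by
          apply Finset.sum_le_sum
          intro k _
          have h1 := hx i k
          have h2 := hx j k
          simp only [Set.mem_Icc] at h1 h2
          nlinarith [h1.1, h1.2, h2.1, h2.2]
      _ = (p:ℝ) := by simp
  have hrsqrt : ∀ i, r i ≤ Real.sqrt p := by
    intro i
    obtain ⟨j, hj⟩ := exists_ne i
    exact (hrle i j hj).trans (hdist j i)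
  -- pairwise disjoint balls
  have hdisj : (Set.univ : Set (Fin (n+1))).PairwiseDisjoint
      (fun i => Metric.ball (x i) (r i / 2)) := by
    intro i _ j _ hij
    apply Metric.ball_disjoint_ball
    have h1 : r i ≤ dist (x j) (x i) := hrle i j (Ne.symm hij)
    have h2 : r j ≤ dist (x i) (x j) := hrle j i hij
    rw [dist_comm] at h1
    linarith
  -- all balls inside big cube
  set S : Set (Fin p → ℝ) := Set.pi Set.univ (fun _ => Set.Icc (-(Real.sqrt p / 2)) (1 + Real.sqrt p / 2)) with hS
  set e := (MeasurableEquiv.toLp 2 (Fin p → ℝ)).symm with he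
  have hsub : ∀ i, Metric.ball (x i) (r i / 2) ⊆ ⇑e ⁻¹' S := by
    intro i z hz
    rw [Set.mem_preimage, hS, Set.mem_pi]
    intro k _
    have hzi : dist z (x i) < r i / 2 := Metric.mem_ball.mp hz
    have hcoord : |z k - x i k| ≤ dist z (x i) := by
      rw [EuclideanSpace.dist_eq, ← Real.sqrt_sq_eq_abs]
      simp only [Real.dist_eq, sq_abs]
      apply Real.sqrt_le_sqrt
      exact Finset.single_le_sum (f := fun k => (z k - x i k)^2)
        (fun k _ => sq_nonneg _) (Finset.mem_univ k)
    have hk := hx i k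
    simp only [Set.mem_Icc] at hk ⊢
    have habs : |z k - x i k| < Real.sqrt p / 2 := lt_of_le_of_lt hcoord
      (lt_of_lt_of_le hzi (by linarith [hrsqrt i]))
    rw [abs_lt] at habs
    have hze : (⇑e z) k = z k := rfl
    constructor <;> [linarith [hk.1, habs.1]; linarith [hk.2, habs.2]]
  -- volume of the big cube
  have hScube : volume (⇑e ⁻¹' S) = ENNReal.ofReal ((1 + Real.sqrt p)^p) := by
    rw [(EuclideanSpace.volume_preserving_symm_measurableEquiv_toLp (Fin p)).measure_preimage
      (MeasurableSet.univ_pi (fun _ => measurableSet_Icc)).nullMeasurableSet]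
    rw [volume_pi_pi]
    have : (1 : ℝ) + Real.sqrt p / 2 - (-(Real.sqrt p / 2)) = 1 + Real.sqrt p := by ring
    simp only [Real.volume_Icc, this]
    rw [Finset.prod_const, Finset.card_univ, Fintype.card_fin,
      ← ENNReal.ofReal_pow (by positivity)]
  -- packing
  have key : ∑ i, volume (Metric.ball (x i) (r i / 2)) ≤ ENNReal.ofReal ((1 + Real.sqrt p)^p) := by
    rw [← hScube]
    rw [← measure_biUnion_finset (by simpa using hdisj) (fun i _ => measurableSet_ball)]
    exact measure_mono (Set.iUnion₂_subset fun i _ => hsub i)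
  have hvb : ∀ i, volume (Metric.ball (x i) (r i / 2))
      = ENNReal.ofReal ((r i / 2)^p) * VE := by
    intro i
    rw [Measure.addHaar_ball volume (x i) (by linarith [hr0 i] : (0:ℝ) ≤ r i / 2)]
    rw [finrank_euclideanSpace_fin]
  -- derive real packing inequality
  have hpack : (∑ i, (r i / 2)^p) * V ≤ (1 + Real.sqrt p)^p := by
    have h1 : ENNReal.ofReal (∑ i, (r i / 2)^p) * VE ≤ ENNReal.ofReal ((1 + Real.sqrt p)^p) := by
      rw [ENNReal.ofReal_sum_of_nonneg (fun i _ => pow_nonneg (by linarith [hr0 i]) p), Finset.sum_mul]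
      simpa only [hvb] using key
    have h2 := ENNReal.toReal_le_toReal (by finiteness) ENNReal.ofReal_ne_top |>.mpr h1
    rw [ENNReal.toReal_mul,
      ENNReal.toReal_ofReal (Finset.sum_nonneg fun i _ => pow_nonneg (by linarith [hr0 i]) p),
      ENNReal.toReal_ofReal (pow_nonneg (by positivity) p)] at h2
    exact h2
  have hsump : ∑ i, (r i)^p ≤ 2^p * (1 + Real.sqrt p)^p / V := by
    rw [le_div_iff₀ hVpos]
    calc (∑ i, (r i)^p) * V = 2^p * ((∑ i, (r i / 2)^p) * V) := by
          have hh : ∑ i, (r i / 2)^p = (∑ i, (r i)^p) / 2^p := by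
            rw [Finset.sum_div]
            exact Finset.sum_congr rfl fun i _ => by rw [div_pow]
          rw [hh]
          field_simp
      _ ≤ 2^p * (1 + Real.sqrt p)^p := by
          apply mul_le_mul_of_nonneg_left hpack (by positivity)
  -- power mean inequality
  set A : ℝ := (1 / (n + 1 : ℝ)) * ∑ i, (r i) ^ 2 with hA
  have hA0 : 0 ≤ A := by
    apply mul_nonneg (by positivity)
    exact Finset.sum_nonneg fun i _ => sq_nonneg _
  have hmean : A ^ ((p:ℝ)/2) ≤ (1 / (n + 1 : ℝ)) * ∑ i, (r i)^p := by
    have hw : ∀ i ∈ (Finset.univ : Finset (Fin (n+1))), (0:ℝ) ≤ 1 / (n + 1 : ℝ) := fun _ _ => by positivity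
    have hw' : ∑ _i : Fin (n+1), (1 / (n + 1 : ℝ)) = 1 := by
      rw [Finset.sum_const, Finset.card_univ, Fintype.card_fin]
      rw [nsmul_eq_mul]; push_cast
      field_simp
    have hz : ∀ i ∈ (Finset.univ : Finset (Fin (n+1))), (0:ℝ) ≤ (r i)^2 := fun i _ => sq_nonneg _
    have hpe : (1:ℝ) ≤ (p:ℝ)/2 := by
      rw [le_div_iff₀ (by norm_num : (0:ℝ) < 2)]
      exact_mod_cast (by exact_mod_cast hp : (2:ℝ) ≤ p)
    have h := Real.rpow_arith_mean_le_arith_mean_rpow Finset.univ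
      (fun _ => 1 / (n + 1 : ℝ)) (fun i => (r i)^2) hw hw' hz hpe
    have hls : A = ∑ i, (1 / (n + 1 : ℝ)) * (r i)^2 := by
      rw [hA, Finset.mul_sum]
    have hrs : ∀ i : Fin (n+1), ((r i)^2 : ℝ) ^ ((p:ℝ)/2) = (r i)^p := by
      intro i
      rw [← Real.rpow_natCast (r i) 2, ← Real.rpow_mul (hr0 i)]
      rw [show ((2:ℕ):ℝ) * ((p:ℝ)/2) = (p:ℝ) by push_cast; ring]
      exact Real.rpow_natCast _ _
    calc A ^ ((p:ℝ)/2) = (∑ i, (1 / (n + 1 : ℝ)) * (r i)^2) ^ ((p:ℝ)/2) := by rw [← hls]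
      _ ≤ ∑ i, (1 / (n + 1 : ℝ)) * ((r i)^2) ^ ((p:ℝ)/2) := h
      _ = (1 / (n + 1 : ℝ)) * ∑ i, (r i)^p := by
          rw [Finset.mul_sum]
          exact Finset.sum_congr rfl fun i _ => by rw [hrs i]
  -- combine
  set C : ℝ := 2 ^ p * (1 + Real.sqrt p) ^ p / ((n + 1 : ℝ) * V) with hC
  have hC0 : 0 ≤ C := by positivity
  have hAC : A ^ ((p:ℝ)/2) ≤ C := by
    apply hmean.trans
    have heq : C = (1 / (n + 1 : ℝ)) * (2 ^ p * (1 + Real.sqrt p) ^ p / V) := by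
      rw [hC]; field_simp
    rw [heq]
    exact mul_le_mul_of_nonneg_left hsump (by positivity)
  have hfin : A ≤ C ^ ((2:ℝ)/p) := by
    have h1 : A = (A ^ ((p:ℝ)/2)) ^ ((2:ℝ)/p) := by
      rw [← Real.rpow_mul hA0]
      rw [show ((p:ℝ)/2) * ((2:ℝ)/p) = 1 by field_simp]
      rw [Real.rpow_one]
    rw [h1]
    exact Real.rpow_le_rpow (Real.rpow_nonneg hA0 _) hAC (by positivity)
  exact hfin
end

section
/- Let X, X_1, ..., X_n be random points in [0,1]^p (p ≥ 2), and let X_{(1)} denote the nearest neighbor of X among X_1,...,X_n. If the joint distribution of (X, X_1,...,X_n) is exchangeable, then E‖X_{(1)} - X‖^2 ≤ c_p (1/(n+1))^{2/p}, where c_p = 4(1+√p)^2 / V_p^{2/p} and V_p is the volume of the unit p-ball. -/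
open MeasureTheory

open Metric ENNReal in

lemma coord_dist_le {p : ℕ} (a b : EuclideanSpace ℝ (Fin p)) (k : Fin p) :
    dist (a k) (b k) ≤ dist a b := by
  rw [EuclideanSpace.dist_eq, show dist (a k) (b k) = Real.sqrt (dist (a k) (b k) ^ 2) from
    (Real.sqrt_sq dist_nonneg).symm]
  exact Real.sqrt_le_sqrt (Finset.single_le_sum (f := fun i => dist (a i) (b i) ^ 2)
    (fun i _ => sq_nonneg _) (Finset.mem_univ k))

lemma cube_dist_le {p : ℕ} {a b : EuclideanSpace ℝ (Fin p)}
    (ha : ∀ k, a k ∈ Set.Icc (0:ℝ) 1) (hb : ∀ k, b k ∈ Set.Icc (0:ℝ) 1) :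
    dist a b ≤ Real.sqrt p := by
  rw [EuclideanSpace.dist_eq]
  apply Real.sqrt_le_sqrt
  calc ∑ i, dist (a i) (b i) ^ 2 ≤ ∑ _i : Fin p, 1 := by
        apply Finset.sum_le_sum; intro i _
        have h1 : dist (a i) (b i) ≤ 1 := by
          rw [Real.dist_eq, abs_le]
          obtain ⟨h1, h2⟩ := ha i; obtain ⟨h3, h4⟩ := hb i
          constructor <;> linarith
        nlinarith [dist_nonneg (x := a i) (y := b i)]
    _ = (p : ℝ) := by simp

lemma volume_box (p : ℕ) (lo hi : ℝ) (h : lo ≤ hi) :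
    volume {y : EuclideanSpace ℝ (Fin p) | ∀ k, y k ∈ Set.Icc lo hi}
      = ENNReal.ofReal ((hi - lo) ^ p) := by
  have e := EuclideanSpace.volume_preserving_symm_measurableEquiv_toLp (ι := Fin p)
  have hs : {y : EuclideanSpace ℝ (Fin p) | ∀ k, y k ∈ Set.Icc lo hi}
      = (MeasurableEquiv.toLp 2 (Fin p → ℝ)).symm ⁻¹' (Set.univ.pi fun _ => Set.Icc lo hi) := by
    ext y
    simp only [Set.mem_setOf_eq, Set.mem_preimage, Set.mem_pi, Set.mem_univ, forall_true_left,
      Set.mem_Icc, true_implies]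
    rfl
  rw [hs, e.measure_preimage
    (MeasurableSet.univ_pi fun _ => measurableSet_Icc).nullMeasurableSet,
    volume_pi_pi, Real.volume_Icc, Finset.prod_const, Finset.card_univ, Fintype.card_fin,
    ENNReal.ofReal_pow (by linarith)]

open Metric ENNReal in
lemma det_bound (p n : ℕ) (hp : 1 ≤ p) (hn : 1 ≤ n)
    (x : Fin (n + 1) → EuclideanSpace ℝ (Fin p))
    (hx : ∀ i k, x i k ∈ Set.Icc (0:ℝ) 1) :
    ∑ j : Fin (n + 1),
        (⨅ i : Fin n, dist (x (Equiv.swap 0 j i.succ)) (x (Equiv.swap 0 j 0))) ^ p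
      ≤ 2 ^ p * (1 + Real.sqrt p) ^ p
          / (volume (Metric.ball (0 : EuclideanSpace ℝ (Fin p)) 1)).toReal := by
  haveI : Nonempty (Fin n) := ⟨⟨0, hn⟩⟩
  haveI : Nontrivial (EuclideanSpace ℝ (Fin p)) := by
    apply Module.nontrivial_of_finrank_pos (R := ℝ)
    rw [finrank_euclideanSpace_fin]; omega
  set r : Fin (n + 1) → ℝ :=
    fun j => ⨅ i : Fin n, dist (x (Equiv.swap 0 j i.succ)) (x (Equiv.swap 0 j 0)) with hr
  have hsqrt : (0:ℝ) ≤ Real.sqrt p := Real.sqrt_nonneg _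
  have hr0 : ∀ j, 0 ≤ r j := fun j => Real.iInf_nonneg fun i => dist_nonneg
  have hbdd : ∀ j, BddBelow (Set.range fun i : Fin n =>
      dist (x (Equiv.swap 0 j i.succ)) (x (Equiv.swap 0 j 0))) :=
    fun j => ⟨0, by rintro _ ⟨i, rfl⟩; exact dist_nonneg⟩
  have hrle : ∀ j j', j ≠ j' → r j ≤ dist (x j') (x j) := by
    intro j j' hne
    have hkne : Equiv.swap 0 j j' ≠ 0 := by
      intro h
      apply hne
      have := congrArg (Equiv.swap 0 j) h
      rw [Equiv.swap_apply_self, Equiv.swap_apply_left] at this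
      exact this.symm
    obtain ⟨i, hi⟩ := Fin.exists_succ_eq.mpr hkne
    have h1 : r j ≤ dist (x (Equiv.swap 0 j i.succ)) (x (Equiv.swap 0 j 0)) :=
      ciInf_le (hbdd j) i
    rwa [hi, Equiv.swap_apply_self, Equiv.swap_apply_left] at h1
  have hrtop : ∀ j, r j ≤ Real.sqrt p := by
    intro j
    refine le_trans (ciInf_le (hbdd j) ⟨0, hn⟩) ?_
    exact cube_dist_le (hx _) (hx _)
  -- disjoint balls
  have hdisj : Pairwise (Function.onFun Disjoint fun j => ball (x j) (r j / 2)) := by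
    intro j j' hne
    apply ball_disjoint_ball
    have h1 := hrle j j' hne
    have h2 := hrle j' j (Ne.symm hne)
    rw [dist_comm (x j')] at h1
    linarith
  have hsub : ∀ j, ball (x j) (r j / 2) ⊆
      {y : EuclideanSpace ℝ (Fin p) | ∀ k, y k ∈ Set.Icc (-(Real.sqrt p/2)) (1 + Real.sqrt p/2)} := by
    intro j y hy k
    have h1 : dist (y k) (x j k) ≤ dist y (x j) := coord_dist_le y (x j) k
    have h2 : dist y (x j) < r j / 2 := mem_ball.mp hy
    have h3 : r j / 2 ≤ Real.sqrt p / 2 := by linarith [hrtop j]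
    have habs : |y k - x j k| ≤ Real.sqrt p / 2 := by
      rw [← Real.dist_eq]
      exact le_of_lt (lt_of_le_of_lt h1 (lt_of_lt_of_le h2 h3))
    obtain ⟨ha, hb⟩ := abs_sub_le_iff.mp habs
    obtain ⟨h5, h6⟩ := hx j k
    rw [Set.mem_Icc]
    constructor <;> linarith
  -- measure bound
  set V := volume (Metric.ball (0 : EuclideanSpace ℝ (Fin p)) 1) with hV
  have hV0 : V ≠ 0 := (measure_ball_pos _ _ one_pos).ne'
  have hVtop : V ≠ ⊤ := measure_ball_lt_top.ne
  have hVt : 0 < V.toReal := ENNReal.toReal_pos hV0 hVtop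
  have hfin : Module.finrank ℝ (EuclideanSpace ℝ (Fin p)) = p := finrank_euclideanSpace_fin
  have hmeas : ∑ j : Fin (n+1), ENNReal.ofReal ((r j / 2) ^ p) * V
      ≤ ENNReal.ofReal ((1 + Real.sqrt p) ^ p) := by
    have hsum : ∑ j : Fin (n+1), volume (ball (x j) (r j / 2))
        = ∑ j : Fin (n+1), ENNReal.ofReal ((r j / 2) ^ p) * V := by
      refine Finset.sum_congr rfl fun j _ => ?_
      rw [Measure.addHaar_ball _ _ (by linarith [hr0 j] : (0:ℝ) ≤ r j / 2), hfin]
    rw [← hsum]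
    calc ∑ j : Fin (n+1), volume (ball (x j) (r j / 2))
        = volume (⋃ j, ball (x j) (r j / 2)) := by
          rw [measure_iUnion hdisj fun j => measurableSet_ball, tsum_fintype]
      _ ≤ volume {y : EuclideanSpace ℝ (Fin p) |
            ∀ k, y k ∈ Set.Icc (-(Real.sqrt p/2)) (1 + Real.sqrt p/2)} :=
          measure_mono (Set.iUnion_subset hsub)
      _ = ENNReal.ofReal ((1 + Real.sqrt p) ^ p) := by
          rw [volume_box p _ _ (by linarith)]
          ring_nf
  -- to reals
  have hsum_nonneg : (0:ℝ) ≤ ∑ j : Fin (n+1), (r j / 2) ^ p :=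
    Finset.sum_nonneg fun j _ => pow_nonneg (by linarith [hr0 j]) _
  have hreal : (∑ j : Fin (n+1), (r j / 2) ^ p) * V.toReal ≤ (1 + Real.sqrt p) ^ p := by
    rw [← ENNReal.ofReal_le_ofReal_iff (pow_nonneg (by linarith) _),
      ENNReal.ofReal_mul hsum_nonneg, ENNReal.ofReal_toReal hVtop,
      ENNReal.ofReal_sum_of_nonneg (fun j _ => pow_nonneg (by linarith [hr0 j]) _)]
    rwa [← Finset.sum_mul] at hmeas
  have hdiv : ∑ j : Fin (n+1), (r j / 2) ^ p ≤ (1 + Real.sqrt p) ^ p / V.toReal :=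
    (le_div_iff₀ hVt).mpr hreal
  calc ∑ j : Fin (n+1), r j ^ p = 2 ^ p * ∑ j : Fin (n+1), (r j / 2) ^ p := by
        rw [Finset.mul_sum]
        refine Finset.sum_congr rfl fun j _ => ?_
        rw [div_pow, mul_div_cancel₀]
        positivity
    _ ≤ 2 ^ p * ((1 + Real.sqrt p) ^ p / V.toReal) := by
        apply mul_le_mul_of_nonneg_left hdiv; positivity
    _ = 2 ^ p * (1 + Real.sqrt p) ^ p / V.toReal := by ring

open Metric ENNReal in
/-- Expected squared nearest-neighbor distance for an exchangeable tuple of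
random points in the unit cube. -/
theorem stmt_2 (p n : ℕ) (hp : 2 ≤ p) (hn : 1 ≤ n)
    {Ω : Type*} [MeasurableSpace Ω] (ℙ : Measure Ω) [IsProbabilityMeasure ℙ]
    (Y : Ω → Fin (n + 1) → EuclideanSpace ℝ (Fin p)) (hY : Measurable Y)
    (hcube : ∀ ω, ∀ i, ∀ k, Y ω i k ∈ Set.Icc (0 : ℝ) 1)
    (hexch : ∀ σ : Equiv.Perm (Fin (n + 1)),
      Measure.map (fun ω => Y ω ∘ σ) ℙ = Measure.map Y ℙ) :
    ∫ ω, (⨅ i : Fin n, dist (Y ω i.succ) (Y ω 0)) ^ 2 ∂ℙ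
      ≤ (4 * (1 + Real.sqrt p) ^ 2 /
          ((volume (Metric.ball (0 : EuclideanSpace ℝ (Fin p)) 1)).toReal ^ ((2 : ℝ) / p)))
        * ((1 : ℝ) / (n + 1)) ^ ((2 : ℝ) / p) := by
  haveI : Nonempty (Fin n) := ⟨⟨0, hn⟩⟩
  have hp1 : 1 ≤ p := le_trans one_le_two hp
  have hp0 : (0:ℝ) < p := by positivity
  set V := volume (Metric.ball (0 : EuclideanSpace ℝ (Fin p)) 1) with hVdef
  have hV0 : V ≠ 0 := by
    haveI : Nontrivial (EuclideanSpace ℝ (Fin p)) := by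
      apply Module.nontrivial_of_finrank_pos (R := ℝ)
      rw [finrank_euclideanSpace_fin]; omega
    exact (measure_ball_pos _ _ one_pos).ne'
  have hVtop : V ≠ ⊤ := measure_ball_lt_top.ne
  have hVt : 0 < V.toReal := ENNReal.toReal_pos hV0 hVtop
  set B : ℝ := 2 ^ p * (1 + Real.sqrt p) ^ p / V.toReal with hBdef
  have hB0 : 0 ≤ B := by positivity
  -- the nearest-neighbor functional
  set g : (Fin (n + 1) → EuclideanSpace ℝ (Fin p)) → ℝ :=
    fun x => ⨅ i : Fin n, dist (x i.succ) (x 0) with hgdef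
  have hg_meas : Measurable g :=
    Measurable.iInf fun i => ((continuous_apply (Fin.succ i)).dist (continuous_apply 0)).measurable
  have hg_nonneg : ∀ x, 0 ≤ g x := fun x => Real.iInf_nonneg fun i => dist_nonneg
  set R : Ω → ℝ := fun ω => g (Y ω) with hRdef
  have hR_meas : Measurable R := hg_meas.comp hY
  set F : (Fin (n + 1) → EuclideanSpace ℝ (Fin p)) → ℝ≥0∞ :=
    fun x => ENNReal.ofReal (g x ^ p) with hFdef
  have hF_meas : Measurable F := (hg_meas.pow_const p).ennreal_ofReal
  -- exchangeability
  have hmapm : ∀ σ : Equiv.Perm (Fin (n + 1)), Measurable (fun ω => Y ω ∘ σ) := fun σ =>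
    measurable_pi_lambda _ fun i => (measurable_pi_apply (σ i)).comp hY
  have hexΙ : ∀ σ : Equiv.Perm (Fin (n + 1)),
      ∫⁻ ω, F (Y ω ∘ σ) ∂ℙ = ∫⁻ ω, F (Y ω) ∂ℙ := by
    intro σ
    rw [← lintegral_map hF_meas (hmapm σ), hexch σ, lintegral_map hF_meas hY]
  set Ip : ℝ≥0∞ := ∫⁻ ω, F (Y ω) ∂ℙ with hIpdef
  have key : ((n : ℝ≥0∞) + 1) * Ip ≤ ENNReal.ofReal B := by
    have h1 : ((n : ℝ≥0∞) + 1) * Ip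
        = ∑ j : Fin (n + 1), ∫⁻ ω, F (Y ω ∘ Equiv.swap 0 j) ∂ℙ := by
      rw [Finset.sum_congr rfl fun j _ => hexΙ (Equiv.swap 0 j)]
      rw [Finset.sum_const, Finset.card_univ, Fintype.card_fin, nsmul_eq_mul]
      push_cast
      ring
    have hsum2 : ∫⁻ ω, ∑ j : Fin (n+1), F (Y ω ∘ Equiv.swap 0 j) ∂ℙ
        = ∑ j : Fin (n+1), ∫⁻ ω, F (Y ω ∘ Equiv.swap 0 j) ∂ℙ :=
      lintegral_finset_sum _ fun j _ => hF_meas.comp (hmapm (Equiv.swap 0 j))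
    rw [h1, ← hsum2]
    calc ∫⁻ ω, ∑ j : Fin (n+1), F (Y ω ∘ Equiv.swap 0 j) ∂ℙ
        ≤ ∫⁻ _ω, ENNReal.ofReal B ∂ℙ := by
          apply lintegral_mono
          intro ω
          dsimp only
          have hpt : ∑ j : Fin (n+1), F (Y ω ∘ Equiv.swap 0 j)
              = ENNReal.ofReal (∑ j : Fin (n+1), g (Y ω ∘ Equiv.swap 0 j) ^ p) :=
            (ENNReal.ofReal_sum_of_nonneg fun j _ =>
              pow_nonneg (hg_nonneg _) _).symm
          rw [hpt]
          apply ENNReal.ofReal_le_ofReal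
          exact det_bound p n hp1 hn (Y ω) (hcube ω)
      _ = ENNReal.ofReal B := by simp
  have hIple : Ip ≤ ENNReal.ofReal B / ((n : ℝ≥0∞) + 1) := by
    rw [ENNReal.le_div_iff_mul_le
      (Or.inl (zero_lt_one.trans_le le_add_self).ne')
      (Or.inl (ENNReal.add_ne_top.mpr ⟨ENNReal.natCast_ne_top n, ENNReal.one_ne_top⟩))]
    rw [mul_comm]; exact key
  -- Jensen via Lp norm comparison
  have hsn : eLpNorm' R 2 ℙ ≤ eLpNorm' R (p : ℝ) ℙ :=
    eLpNorm'_le_eLpNorm'_of_exponent_le (by norm_num) (by exact_mod_cast hp) ℙ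
      hR_meas.aestronglyMeasurable
  have hR_nonneg : ∀ ω, 0 ≤ R ω := fun ω => hg_nonneg (Y ω)
  have hpow : ∀ (m : ℕ) (ω : Ω), ((‖R ω‖₊ : ℝ≥0∞)) ^ (m : ℝ) = ENNReal.ofReal (R ω ^ m) := by
    intro m ω
    rw [show ((‖R ω‖₊ : ℝ≥0∞)) = ENNReal.ofReal (R ω) from
      Real.enorm_eq_ofReal (hR_nonneg ω),
      ENNReal.ofReal_rpow_of_nonneg (hR_nonneg ω) (by positivity),
      Real.rpow_natCast]
  set I2 : ℝ≥0∞ := ∫⁻ ω, ENNReal.ofReal (R ω ^ 2) ∂ℙ with hI2def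
  have hIpeq : (∫⁻ ω, ((‖R ω‖₊ : ℝ≥0∞)) ^ (p : ℝ) ∂ℙ) = Ip := by
    refine lintegral_congr fun ω => ?_
    rw [hpow p ω]
  have hI2eq : (∫⁻ ω, ((‖R ω‖₊ : ℝ≥0∞)) ^ (2 : ℝ) ∂ℙ) = I2 := by
    refine lintegral_congr fun ω => ?_
    rw [show (2:ℝ) = ((2:ℕ):ℝ) by norm_num, hpow 2 ω]
  have hsn2 : I2 ^ ((1:ℝ)/2) ≤ Ip ^ (1/(p:ℝ)) := by
    have := hsn
    rw [eLpNorm', eLpNorm'] at this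
    rw [← hIpeq, ← hI2eq]
    exact this
  have hI2le : I2 ≤ Ip ^ ((2:ℝ)/p) := by
    have h2 := ENNReal.rpow_le_rpow hsn2 (by norm_num : (0:ℝ) ≤ 2)
    rwa [← ENNReal.rpow_mul, ← ENNReal.rpow_mul,
      show (1:ℝ)/2 * 2 = 1 by norm_num, ENNReal.rpow_one,
      show 1/(p:ℝ) * 2 = 2/p by ring] at h2
  have hfinal : I2 ≤ ENNReal.ofReal ((B / (n + 1)) ^ ((2:ℝ)/p)) := by
    refine le_trans (le_trans hI2le (ENNReal.rpow_le_rpow hIple (by positivity))) ?_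
    rw [show ((n : ℝ≥0∞) + 1) = ENNReal.ofReal ((n : ℝ) + 1) by
        rw [ENNReal.ofReal_add (by positivity) zero_le_one]; simp,
      ← ENNReal.ofReal_div_of_pos (by positivity),
      ENNReal.ofReal_rpow_of_nonneg (by positivity) (by positivity)]
  -- convert to the Bochner integral
  have hlhs : ∫ ω, (⨅ i : Fin n, dist (Y ω i.succ) (Y ω 0)) ^ 2 ∂ℙ = I2.toReal := by
    rw [hI2def]
    rw [integral_eq_lintegral_of_nonneg_ae
      (Filter.Eventually.of_forall fun ω => sq_nonneg _)
      ((hR_meas.pow_const 2).aestronglyMeasurable)]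
  rw [hlhs]
  have hle := ENNReal.toReal_mono (by simp) hfinal
  rw [ENNReal.toReal_ofReal (by positivity)] at hle
  refine le_trans hle (le_of_eq ?_)
  -- algebraic identity
  have h1 : B / ((n:ℝ) + 1) = (2 ^ p * (1 + Real.sqrt p) ^ p / V.toReal) * (1 / ((n:ℝ)+1)) := by
    rw [hBdef]; ring
  rw [h1, Real.mul_rpow (by positivity) (by positivity),
    Real.div_rpow (by positivity) (le_of_lt hVt),
    Real.mul_rpow (by positivity) (by positivity)]
  have h2 : ((2:ℝ) ^ p) ^ ((2:ℝ)/p) = 4 := by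
    rw [← Real.rpow_natCast 2 p, ← Real.rpow_mul (by norm_num),
      show (p:ℝ) * (2/p) = 2 by field_simp,
      show (2:ℝ) = ((2:ℕ):ℝ) by norm_num, Real.rpow_natCast]
    norm_num
  have h3 : ((1 + Real.sqrt p) ^ p) ^ ((2:ℝ)/p) = (1 + Real.sqrt p) ^ 2 := by
    rw [← Real.rpow_natCast (1 + Real.sqrt p) p, ← Real.rpow_mul (by positivity),
      show (p:ℝ) * (2/p) = 2 by field_simp,
      show (2:ℝ) = ((2:ℕ):ℝ) by norm_num, Real.rpow_natCast]
  rw [h2, h3]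
end

section
/- Let X, X_1, ..., X_n be i.i.d. points in [0,1], exchangeable as an (n+1)-tuple, and X_{(1)} the nearest neighbor of X among X_1,...,X_n. Then E|X_{(1)} - X|^2 ≤ 2/(n+1). -/
set_option maxHeartbeats 1000000
open MeasureTheory ProbabilityTheory Set

lemma det_sum {m : ℕ} (x r : Fin m → ℝ) (hx : ∀ i, x i ∈ Set.Icc (0:ℝ) 1)
    (hr0 : ∀ i, 0 ≤ r i) (hr1 : ∀ i, r i ≤ 1)
    (hri : ∀ i k, i ≠ k → r i ≤ |x k - x i|) :
    ∑ i, r i ^ 2 ≤ 2 := by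
  have h1 : ∑ i, r i ^ 2 ≤ ∑ i, r i :=
    Finset.sum_le_sum fun i _ => by nlinarith [hr0 i, hr1 i]
  have h2 : ∑ i, r i ≤ 2 := by
    set s : Fin m → Set ℝ := fun i => Ioo (x i - r i / 2) (x i + r i / 2) with hs
    have hdisj : Pairwise (Function.onFun Disjoint s) := by
      intro i j hij
      rw [Function.onFun, Set.disjoint_left]
      intro y hyi hyj
      simp only [hs, mem_Ioo] at hyi hyj
      have h1 := hri i j hij
      have h2 := hri j i hij.symm
      cases abs_cases (x j - x i) with
      | inl h => cases abs_cases (x i - x j) with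
        | inl h' => linarith [h.1, h'.1]
        | inr h' => linarith [h.1, h'.1]
      | inr h => cases abs_cases (x i - x j) with
        | inl h' => linarith [h.1, h'.1]
        | inr h' => linarith [h.1, h'.1]
    have hsub : ∀ i, s i ⊆ Icc (-(1:ℝ)/2) (3/2) := by
      intro i y hy
      simp only [hs, mem_Ioo] at hy
      have := (hx i).1; have := (hx i).2; have := hr0 i; have := hr1 i
      constructor <;> [linarith [hy.1]; linarith [hy.2]]
    have hmeas : ∀ i, MeasurableSet (s i) := fun i => measurableSet_Ioo
    have hvol : volume (⋃ i, s i) = ∑ i, ENNReal.ofReal (r i) := by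
      rw [measure_iUnion hdisj hmeas, tsum_fintype]
      congr 1; ext i
      rw [hs, Real.volume_Ioo]
      congr 1; ring
    have hle : volume (⋃ i, s i) ≤ volume (Icc (-(1:ℝ)/2) (3/2)) :=
      measure_mono (Set.iUnion_subset hsub)
    rw [hvol, Real.volume_Icc] at hle
    have : (3:ℝ)/2 - -1/2 = 2 := by ring
    rw [this] at hle
    rw [← ENNReal.ofReal_sum_of_nonneg (fun i _ => hr0 i)] at hle
    exact (ENNReal.ofReal_le_ofReal_iff (by norm_num)).mp hle
  linarith

/-- One-dimensional case: i.i.d. points in `[0,1]`; the expected squared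
nearest-neighbor distance is at most `2/(n+1)`. -/
theorem stmt_3 (n : ℕ) (hn : 1 ≤ n)
    {Ω : Type*} [MeasurableSpace Ω] (μ : Measure Ω) [IsProbabilityMeasure μ]
    (Y : Fin (n + 1) → Ω → ℝ) (hY : ∀ i, Measurable (Y i))
    (hiid : iIndepFun Y μ)
    (hid : ∀ i j, IdentDistrib (Y i) (Y j) μ μ)
    (hcube : ∀ i, ∀ ω, Y i ω ∈ Set.Icc (0 : ℝ) 1) :
    ∫ ω, (⨅ i : Fin n, |Y i.succ ω - Y 0 ω|) ^ 2 ∂μ ≤ 2 / (n + 1 : ℝ) := by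
  haveI : NeZero n := ⟨by omega⟩
  set ν : Measure ℝ := μ.map (Y 0) with hνdef
  haveI : IsProbabilityMeasure ν := Measure.isProbabilityMeasure_map (hY 0).aemeasurable
  set vec : Ω → (Fin (n+1) → ℝ) := fun ω i => Y i ω with hvecdef
  have hvec : Measurable vec := measurable_pi_lambda _ hY
  -- law of the vector is the product measure
  have hP : Measure.pi (fun _ : Fin (n+1) => ν) = μ.map vec := by
    apply Measure.pi_eq
    intro s hs
    rw [Measure.map_apply hvec (MeasurableSet.univ_pi hs)]
    have h1 : vec ⁻¹' Set.pi Set.univ s = ⋂ i ∈ Finset.univ, Y i ⁻¹' s i := by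
      ext ω; simp [Set.mem_pi, hvecdef]
    rw [h1, hiid.measure_inter_preimage_eq_mul Finset.univ (fun i _ => hs i)]
    apply Finset.prod_congr rfl
    intro i _
    rw [hνdef, ← (hid i 0).map_eq, Measure.map_apply (hY i) (hs i)]
  -- permutation invariance of the product measure
  have hperm : ∀ σ : Equiv.Perm (Fin (n+1)),
      (Measure.pi (fun _ : Fin (n+1) => ν)).map (fun x => x ∘ σ)
        = Measure.pi (fun _ : Fin (n+1) => ν) := by
    intro σ
    have hm : Measurable (fun x : Fin (n+1) → ℝ => x ∘ σ) :=
      measurable_pi_lambda _ (fun i => measurable_pi_apply (σ i))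
    refine (Measure.pi_eq fun s hs => ?_).symm
    rw [Measure.map_apply hm (MeasurableSet.univ_pi hs)]
    have h1 : (fun x : Fin (n+1) → ℝ => x ∘ σ) ⁻¹' Set.pi Set.univ s
        = Set.pi Set.univ (fun j => s (σ.symm j)) := by
      ext x
      simp only [mem_preimage, Set.mem_pi, mem_univ, true_implies, Function.comp]
      constructor
      · intro h j; simpa using h (σ.symm j)
      · intro h i; simpa using h (σ i)
    rw [h1, Measure.pi_pi]
    exact Fintype.prod_equiv σ.symm _ _ (fun j => rfl)
  -- the family of nearest-neighbor functionals
  set g : Fin (n+1) → (Fin (n+1) → ℝ) → ℝ :=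
    fun j x => (⨅ i : Fin n, |x (Equiv.swap 0 j i.succ) - x j|) ^ 2 with hgdef
  have hgmeas : ∀ j, Measurable (g j) := by
    intro j
    have h1 : Measurable (fun x : Fin (n+1) → ℝ =>
        ⨅ i : Fin n, |x (Equiv.swap 0 j i.succ) - x j|) :=
      Measurable.iInf fun i => ((measurable_pi_apply (Equiv.swap 0 j i.succ)).sub (measurable_pi_apply j)).abs
    exact h1.pow_const 2
  -- g j = g 0 ∘ (· ∘ swap 0 j)
  have hgcomp : ∀ j x, g j x = g 0 (x ∘ Equiv.swap 0 j) := by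
    intro j x
    simp [hgdef, Equiv.swap_self, Equiv.refl_apply, Function.comp, Equiv.swap_apply_left]
  -- equal expectations under the product law
  have hEeq : ∀ j, ∫ x, g j x ∂(μ.map vec) = ∫ x, g 0 x ∂(μ.map vec) := by
    intro j
    rw [← hP]
    have hm : Measurable (fun x : Fin (n+1) → ℝ => x ∘ (Equiv.swap 0 j)) :=
      measurable_pi_lambda _ (fun i => measurable_pi_apply _)
    calc ∫ x, g j x ∂(Measure.pi (fun _ : Fin (n+1) => ν))
        = ∫ x, g 0 (x ∘ Equiv.swap 0 j) ∂(Measure.pi (fun _ : Fin (n+1) => ν)) := by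
          simp_rw [hgcomp j]
      _ = ∫ x, g 0 x ∂((Measure.pi (fun _ : Fin (n+1) => ν)).map
            (fun x => x ∘ Equiv.swap 0 j)) := by
          rw [integral_map hm.aemeasurable (hgmeas 0).aestronglyMeasurable]
      _ = ∫ x, g 0 x ∂(Measure.pi (fun _ : Fin (n+1) => ν)) := by rw [hperm]
  -- pointwise facts about F j ω := g j (vec ω)
  have hF0 : ∀ j ω, 0 ≤ g j (vec ω) := fun j ω => sq_nonneg _
  have hFr : ∀ j ω, ∀ k, k ≠ j →
      (⨅ i : Fin n, |vec ω (Equiv.swap 0 j i.succ) - vec ω j|) ≤ |Y k ω - Y j ω| := by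
    intro j ω k hk
    have h0 : Equiv.swap 0 j k ≠ 0 := by
      intro h
      apply hk
      have := congrArg (Equiv.swap (0 : Fin (n+1)) j) h
      rwa [Equiv.swap_apply_self, Equiv.swap_apply_left] at this
    obtain ⟨m, hm⟩ : ∃ m : Fin n, m.succ = Equiv.swap 0 j k :=
      ⟨(Equiv.swap 0 j k).pred h0, Fin.succ_pred _ h0⟩
    have := ciInf_le (f := fun i : Fin n => |vec ω (Equiv.swap 0 j i.succ) - vec ω j|)
      ⟨0, fun y hy => by rcases hy with ⟨i, rfl⟩; exact abs_nonneg _⟩ m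
    rw [hm, Equiv.swap_apply_self] at this
    exact this
  have hFinf0 : ∀ j ω, 0 ≤ ⨅ i : Fin n, |vec ω (Equiv.swap 0 j i.succ) - vec ω j| :=
    fun j ω => le_ciInf fun i => abs_nonneg _
  have hFinf1 : ∀ j ω, (⨅ i : Fin n, |vec ω (Equiv.swap 0 j i.succ) - vec ω j|) ≤ 1 := by
    intro j ω
    have hne : (0 : Fin (n+1)) ≠ j ∨ (1 : Fin (n+1)) ≠ j := by
      rcases eq_or_ne (0 : Fin (n+1)) j with h | h
      · right; rw [← h]; simp [Fin.ext_iff]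
      · left; exact h
    have habs : ∀ k, k ≠ j → |Y k ω - Y j ω| ≤ 1 := by
      intro k _
      have h1 := hcube k ω; have h2 := hcube j ω
      rw [abs_le]; constructor <;> [linarith [h1.1, h2.2]; linarith [h1.2, h2.1]]
    rcases hne with h | h
    · exact (hFr j ω 0 h).trans (habs 0 h)
    · exact (hFr j ω 1 h).trans (habs 1 h)
  have hF1 : ∀ j ω, g j (vec ω) ≤ 1 := by
    intro j ω
    simp only [hgdef]
    nlinarith [hFinf0 j ω, hFinf1 j ω]
  have hsum : ∀ ω, ∑ j, g j (vec ω) ≤ 2 := by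
    intro ω
    refine det_sum (fun j => Y j ω)
      (fun j => ⨅ i : Fin n, |vec ω (Equiv.swap 0 j i.succ) - vec ω j|)
      (fun j => hcube j ω) (hFinf0 · ω) (hFinf1 · ω) ?_
    intro j k hk
    exact hFr j ω k (Ne.symm hk)
  -- integrability
  have hInt : ∀ j, Integrable (fun ω => g j (vec ω)) μ := by
    intro j
    refine Integrable.mono' (integrable_const 1)
      ((hgmeas j).comp hvec).aestronglyMeasurable ?_
    filter_upwards with ω
    rw [Real.norm_eq_abs, abs_of_nonneg (hF0 j ω)]
    exact hF1 j ω
  -- equal expectations under μ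
  have hEeqμ : ∀ j, ∫ ω, g j (vec ω) ∂μ = ∫ ω, g 0 (vec ω) ∂μ := by
    intro j
    rw [← integral_map hvec.aemeasurable (hgmeas j).aestronglyMeasurable,
        ← integral_map hvec.aemeasurable (hgmeas 0).aestronglyMeasurable]
    exact hEeq j
  -- sum up
  have hsumInt : ∑ j, ∫ ω, g j (vec ω) ∂μ ≤ 2 := by
    rw [← integral_finset_sum _ (fun j _ => hInt j)]
    calc ∫ ω, ∑ j, g j (vec ω) ∂μ ≤ ∫ _, (2:ℝ) ∂μ :=
          integral_mono (integrable_finset_sum _ (fun j _ => hInt j))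
            (integrable_const 2) hsum
      _ = 2 := by simp
  have hmain : (n + 1 : ℝ) * ∫ ω, g 0 (vec ω) ∂μ ≤ 2 := by
    have : ∑ j, ∫ ω, g j (vec ω) ∂μ = (n + 1 : ℝ) * ∫ ω, g 0 (vec ω) ∂μ := by
      rw [Finset.sum_congr rfl (fun j _ => hEeqμ j)]
      simp [Finset.card_univ, mul_comm]
    linarith [hsumInt, this.symm.le]
  have hgoal : ∫ ω, (⨅ i : Fin n, |Y i.succ ω - Y 0 ω|) ^ 2 ∂μ = ∫ ω, g 0 (vec ω) ∂μ := by
    refine integral_congr_ae (Filter.Eventually.of_forall fun ω => ?_)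
    simp [hgdef, hvecdef, Equiv.swap_self]
  rw [hgoal, div_eq_inv_mul, le_inv_mul_iff₀ (by positivity)]
  linarith [hmain]
end

section
/- Let X_1, ..., X_n be i.i.d. samples from a density f on [0,1]^p that is bounded away from zero, and let X be an independent point with density f. Then the probability that X lies in the convex hull of {X_1, ..., X_n} tends to 1 as n → ∞. -/
open MeasureTheory ProbabilityTheory

open MeasureTheory ProbabilityTheory ENNReal

lemma hull_lemma (p : ℕ) (δ : ℝ) (hδ : 0 < δ) (hδ2 : δ ≤ 1/2)
    (y : (Fin p → Bool) → EuclideanSpace ℝ (Fin p))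
    (hy : ∀ s k, y s k ∈ Set.Icc (if s k then 1-δ else 0) (if s k then 1 else δ))
    (x : EuclideanSpace ℝ (Fin p)) (hx : ∀ k, x k ∈ Set.Icc δ (1-δ)) :
    x ∈ convexHull ℝ (Set.range y) := by
  by_contra hcon
  have hfin : (Set.range y).Finite := Set.finite_range y
  obtain ⟨g, u, h1, h2⟩ := geometric_hahn_banach_closed_point
    (convex_convexHull ℝ _) (hfin.isCompact_convexHull (𝕜 := ℝ)).isClosed hcon
  set a : Fin p → ℝ := fun k => g (EuclideanSpace.basisFun (Fin p) ℝ k)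
  have hrep : ∀ z : EuclideanSpace ℝ (Fin p), g z = ∑ k, z k * a k := by
    intro z
    conv_lhs => rw [← (EuclideanSpace.basisFun (Fin p) ℝ).sum_repr z]
    rw [map_sum]
    refine Finset.sum_congr rfl fun k _ => ?_
    rw [g.map_smul]
    simp [a, smul_eq_mul, EuclideanSpace.basisFun_repr]
  set s : Fin p → Bool := fun k => decide (0 < a k)
  have hmem : y s ∈ convexHull ℝ (Set.range y) :=
    subset_convexHull ℝ _ ⟨s, rfl⟩
  have hlt : g (y s) < g x := lt_trans (h1 _ hmem) h2
  have hge : g x ≤ g (y s) := by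
    rw [hrep, hrep]
    refine Finset.sum_le_sum fun k _ => ?_
    rcases lt_or_ge 0 (a k) with hk | hk
    · have hs : s k = true := by simp [s, hk]
      have h3 := hy s k; rw [hs] at h3; simp at h3
      have hxk := (hx k).2
      nlinarith [h3.1]
    · have hs : s k = false := by simp [s, not_lt.2 hk]
      have h3 := hy s k; rw [hs] at h3; simp at h3
      have hxk := (hx k).1
      nlinarith [h3.2]
  exact absurd hlt (not_lt.2 hge)


variable {p : ℕ}

lemma coordSet_eq (I : Fin p → Set ℝ) :
    {x : EuclideanSpace ℝ (Fin p) | ∀ k, x k ∈ I k}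
      = (MeasurableEquiv.toLp 2 (Fin p → ℝ)).symm ⁻¹' (Set.univ.pi I) := by
  ext x; simp [MeasurableEquiv.coe_toLp_symm, Set.mem_pi]

lemma coordSet_meas (I : Fin p → Set ℝ) (hI : ∀ k, MeasurableSet (I k)) :
    MeasurableSet {x : EuclideanSpace ℝ (Fin p) | ∀ k, x k ∈ I k} := by
  rw [coordSet_eq]
  exact (MeasurableEquiv.toLp 2 (Fin p → ℝ)).symm.measurable
    (MeasurableSet.univ_pi hI)

lemma coordSet_vol (I : Fin p → Set ℝ) (hI : ∀ k, MeasurableSet (I k)) :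
    volume {x : EuclideanSpace ℝ (Fin p) | ∀ k, x k ∈ I k} = ∏ k, volume (I k) := by
  rw [coordSet_eq,
    (EuclideanSpace.volume_preserving_symm_measurableEquiv_toLp (Fin p)).measure_preimage
      (MeasurableSet.univ_pi hI).nullMeasurableSet]
  exact volume_pi_pi I

variable {p : ℕ}

section nu
variable (f : EuclideanSpace ℝ (Fin p) → ℝ) (hf : Measurable f)

local notation "ν" => volume.withDensity (fun x => ENNReal.ofReal (f x))

lemma nu_cube
    (hout : ∀ x, ¬ (∀ k, x k ∈ Set.Icc (0 : ℝ) 1) → f x = 0)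
    (hprob : IsProbabilityMeasure (volume.withDensity (fun x => ENNReal.ofReal (f x)))) :
    (ν) {x : EuclideanSpace ℝ (Fin p) | ∀ k, x k ∈ Set.Icc (0:ℝ) 1} = 1 := by
  set Cube := {x : EuclideanSpace ℝ (Fin p) | ∀ k, x k ∈ Set.Icc (0:ℝ) 1}
  have hmC : MeasurableSet Cube := coordSet_meas _ (fun _ => measurableSet_Icc)
  have hcompl : (ν) Cubeᶜ = 0 := by
    rw [withDensity_apply _ hmC.compl]
    rw [setLIntegral_congr_fun hmC.compl
      ((fun x hx => by
        rw [hout x hx, ENNReal.ofReal_zero] : ∀ x ∈ Cubeᶜ, ENNReal.ofReal (f x) = (fun _ => (0:ℝ≥0∞)) x))]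
    simp
  have h1 : (ν) Cube + (ν) Cubeᶜ = 1 := by
    rw [measure_add_measure_compl hmC]; exact measure_univ
  rw [hcompl, add_zero] at h1; exact h1

lemma nu_open_cube
    (hout : ∀ x, ¬ (∀ k, x k ∈ Set.Icc (0 : ℝ) 1) → f x = 0)
    (hprob : IsProbabilityMeasure (volume.withDensity (fun x => ENNReal.ofReal (f x)))) :
    (ν) {x : EuclideanSpace ℝ (Fin p) | ∀ k, x k ∈ Set.Ioo (0:ℝ) 1} = 1 := by
  haveI := hprob
  set Cube := {x : EuclideanSpace ℝ (Fin p) | ∀ k, x k ∈ Set.Icc (0:ℝ) 1} with hCube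
  set OC := {x : EuclideanSpace ℝ (Fin p) | ∀ k, x k ∈ Set.Ioo (0:ℝ) 1} with hOC
  have hsub : OC ⊆ Cube := fun x hx k => ⟨(hx k).1.le, (hx k).2.le⟩
  have hmC : MeasurableSet Cube := coordSet_meas _ (fun _ => measurableSet_Icc)
  have hmO : MeasurableSet OC := coordSet_meas _ (fun _ => measurableSet_Ioo)
  have hvolC : volume Cube = 1 := by
    rw [hCube, coordSet_vol _ (fun _ => measurableSet_Icc)]
    simp [Real.volume_Icc]
  have hvolO : volume OC = 1 := by
    rw [hOC, coordSet_vol _ (fun _ => measurableSet_Ioo)]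
    simp [Real.volume_Ioo]
  have hdiff : volume (Cube \ OC) = 0 := by
    rw [measure_diff hsub hmO.nullMeasurableSet (by rw [hvolO]; exact one_ne_top),
      hvolC, hvolO, tsub_self]
  have hnudiff : (ν) (Cube \ OC) = 0 :=
    (withDensity_absolutelyContinuous volume _) hdiff
  have h1 : (1:ℝ≥0∞) ≤ (ν) OC + (ν) (Cube \ OC) := by
    rw [← nu_cube f hout hprob]
    exact (measure_mono (fun x hx => by
      by_cases h : x ∈ OC
      · exact Set.mem_union_left _ h
      · exact Set.mem_union_right _ ⟨hx, h⟩)).trans (measure_union_le _ _)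
  rw [hnudiff, add_zero] at h1
  exact le_antisymm prob_le_one h1

end nu

section nu2
variable (f : EuclideanSpace ℝ (Fin p) → ℝ)

local notation "ν" => volume.withDensity (fun x => ENNReal.ofReal (f x))

/-- the corner box -/
def Box (δ : ℝ) (s : Fin p → Bool) : Set (EuclideanSpace ℝ (Fin p)) :=
  {x | ∀ k, x k ∈ Set.Icc (if s k then 1-δ else 0) (if s k then 1 else δ)}

lemma box_meas (δ : ℝ) (s : Fin p → Bool) : MeasurableSet (Box δ s) :=
  coordSet_meas _ (fun _ => measurableSet_Icc)

lemma box_subset_cube {δ : ℝ} (hδ : 0 < δ) (hδ2 : δ ≤ 1/2) (s : Fin p → Bool) :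
    Box δ s ⊆ {x : EuclideanSpace ℝ (Fin p) | ∀ k, x k ∈ Set.Icc (0:ℝ) 1} := by
  intro x hx k
  have := hx k
  cases hsk : s k <;> rw [hsk] at this <;> simp at this <;>
    constructor <;> linarith [this.1, this.2]

lemma box_vol {δ : ℝ} (hδ : 0 < δ) (hδ2 : δ ≤ 1/2) (s : Fin p → Bool) :
    volume (Box δ s) = ENNReal.ofReal δ ^ p := by
  rw [Box, coordSet_vol _ (fun _ => measurableSet_Icc)]
  have : ∀ k : Fin p, volume (Set.Icc (if s k then 1-δ else 0) (if s k then 1 else δ))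
      = ENNReal.ofReal δ := by
    intro k; cases hsk : s k <;> simp [Real.volume_Icc]
  simp [this, Finset.prod_const]

lemma nu_box (hf : Measurable f) {c : ℝ} (hc : 0 < c)
    (hlb : ∀ x, (∀ k, x k ∈ Set.Icc (0 : ℝ) 1) → c ≤ f x)
    {δ : ℝ} (hδ : 0 < δ) (hδ2 : δ ≤ 1/2) (s : Fin p → Bool) :
    ENNReal.ofReal c * ENNReal.ofReal δ ^ p ≤ (ν) (Box δ s) := by
  rw [withDensity_apply _ (box_meas δ s)]
  calc ENNReal.ofReal c * ENNReal.ofReal δ ^ p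
      = ∫⁻ _ in Box δ s, ENNReal.ofReal c := by
        rw [setLIntegral_const, box_vol hδ hδ2]
    _ ≤ ∫⁻ x in Box δ s, ENNReal.ofReal (f x) := by
        refine setLIntegral_mono (ENNReal.measurable_ofReal.comp hf) (fun x hx => ?_)
        exact ENNReal.ofReal_le_ofReal (hlb x (box_subset_cube hδ hδ2 s hx))

end nu2

/-- measure of "no sample among the first n hits B" -/
lemma miss_prob {Ω : Type*} [MeasurableSpace Ω] (μ : Measure Ω) [IsProbabilityMeasure μ]
    (W : ℕ → Ω → EuclideanSpace ℝ (Fin p)) (hW : ∀ i, Measurable (W i))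
    (hiid : iIndepFun W μ)
    (ν' : Measure (EuclideanSpace ℝ (Fin p)))
    (hlaw : ∀ i, Measure.map (W i) μ = ν') [IsProbabilityMeasure ν']
    (n : ℕ) (B : Set (EuclideanSpace ℝ (Fin p))) (hB : MeasurableSet B) :
    μ {ω | ∀ i : Fin n, W (i+1 : ℕ) ω ∉ B} = (1 - ν' B) ^ n := by
  have hset : {ω | ∀ i : Fin n, W (i+1 : ℕ) ω ∉ B}
      = ⋂ i ∈ (Finset.range n).image (· + 1), W i ⁻¹' Bᶜ := by
    ext ω
    simp only [Set.mem_setOf_eq, Set.mem_iInter, Finset.mem_image, Finset.mem_range,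
      Set.mem_preimage, Set.mem_compl_iff]
    constructor
    · rintro h i ⟨j, hj, rfl⟩; exact h ⟨j, hj⟩
    · intro h i; exact h _ ⟨i, i.isLt, rfl⟩
  rw [hset, hiid.meas_biInter (fun i _ => ⟨Bᶜ, hB.compl, rfl⟩)]
  have hμi : ∀ i : ℕ, μ (W i ⁻¹' Bᶜ) = 1 - ν' B := by
    intro i
    rw [← Measure.map_apply (hW i) hB.compl, hlaw i,
      measure_compl hB (measure_ne_top _ _), measure_univ]
  rw [Finset.prod_congr rfl (fun i _ => hμi i), Finset.prod_const,
    Finset.card_image_of_injective _ (fun a b h => by omega), Finset.card_range]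

lemma inner_choice (hp : 1 ≤ p) (f : EuclideanSpace ℝ (Fin p) → ℝ) (hf : Measurable f)
    (hout : ∀ x, ¬ (∀ k, x k ∈ Set.Icc (0 : ℝ) 1) → f x = 0)
    (hprob : IsProbabilityMeasure (volume.withDensity (fun x => ENNReal.ofReal (f x))))
    {ε : ℝ≥0∞} (hε : 0 < ε) :
    ∃ δ : ℝ, 0 < δ ∧ δ ≤ 1/2 ∧
      1 - (volume.withDensity (fun x => ENNReal.ofReal (f x)))
        {x : EuclideanSpace ℝ (Fin p) | ∀ k, x k ∈ Set.Icc δ (1-δ)} < ε := by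
  set ν := volume.withDensity (fun x => ENNReal.ofReal (f x))
  haveI := hprob
  set K : ℕ → Set (EuclideanSpace ℝ (Fin p)) :=
    fun m => {x | ∀ k, x k ∈ Set.Icc (1/(m+2) : ℝ) (1 - 1/(m+2))} with hK
  have hmono : Monotone K := by
    intro m m' hmm x hx k
    have h2 : (0:ℝ) < m + 2 := by positivity
    have h2' : (0:ℝ) < m' + 2 := by positivity
    have hle : (1:ℝ)/(m'+2) ≤ 1/(m+2) := by
      apply div_le_div_of_nonneg_left one_pos.le h2
      exact_mod_cast by exact_mod_cast add_le_add_left (Nat.cast_le.2 hmm) 2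
    exact ⟨hle.trans (hx k).1, (hx k).2.trans (by linarith)⟩
  have hunion : ⋃ m, K m = {x : EuclideanSpace ℝ (Fin p) | ∀ k, x k ∈ Set.Ioo (0:ℝ) 1} := by
    ext x
    simp only [Set.mem_iUnion, Set.mem_setOf_eq]
    constructor
    · rintro ⟨m, hm⟩ k
      have h2 : (0:ℝ) < m + 2 := by positivity
      have := hm k
      constructor <;> [skip; skip] <;> nlinarith [this.1, this.2, one_div_pos.2 h2]
    · intro hx
      have hne : (Finset.univ : Finset (Fin p)).Nonempty := by
        rw [Finset.univ_nonempty_iff]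
        exact Fin.pos_iff_nonempty.1 hp
      set r : ℝ := Finset.univ.inf' hne (fun k => min (x k) (1 - x k)) with hr
      have hrpos : 0 < r := by
        rw [hr, Finset.lt_inf'_iff]
        intro k _
        exact lt_min (hx k).1 (by linarith [(hx k).2])
      obtain ⟨m, hm⟩ := exists_nat_gt (1/r)
      refine ⟨m, fun k => ?_⟩
      have hrle : r ≤ min (x k) (1 - x k) :=
        Finset.inf'_le _ (Finset.mem_univ k)
      have h2 : (0:ℝ) < (m:ℝ) + 2 := by positivity
      have h1r : 1/((m:ℝ)+2) < r := by
        rw [div_lt_iff₀ h2]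
        rw [div_lt_iff₀ hrpos] at hm
        nlinarith
      constructor
      · linarith [le_trans hrle (min_le_left _ _)]
      · linarith [le_trans hrle (min_le_right _ _)]
  have htend : Filter.Tendsto (fun m => ν (K m)) Filter.atTop (nhds 1) := by
    have := tendsto_measure_iUnion_atTop (μ := ν) hmono
    rwa [hunion, nu_open_cube f hout hprob] at this
  have hlt1 : 1 - ε < (1:ℝ≥0∞) := by
    apply ENNReal.sub_lt_self one_ne_top one_ne_zero hε.ne'
  obtain ⟨m, hm⟩ := (htend.eventually (eventually_gt_nhds hlt1)).exists
  refine ⟨1/(m+2), by positivity, ?_, ?_⟩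
  · rw [div_le_div_iff₀ (by positivity) two_pos]; nlinarith [(Nat.cast_nonneg m : (0:ℝ) ≤ m)]
  · rw [ENNReal.sub_lt_iff_lt_right (measure_ne_top _ _) prob_le_one]
    rcases le_or_gt ε 1 with h1 | h1
    · rw [ENNReal.sub_lt_iff_lt_right (h1.trans_lt one_lt_top).ne h1] at hm
      rwa [add_comm]
    · exact h1.trans_le le_self_add


/-- The probability that an independent point with density `f` lies in the
convex hull of `n` i.i.d. samples from `f` tends to one. -/
theorem stmt_4 (p : ℕ) (hp : 1 ≤ p)
    (f : EuclideanSpace ℝ (Fin p) → ℝ) (hf : Measurable f)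
    (c : ℝ) (hc : 0 < c)
    (hlb : ∀ x, (∀ k, x k ∈ Set.Icc (0 : ℝ) 1) → c ≤ f x)
    (hout : ∀ x, ¬ (∀ k, x k ∈ Set.Icc (0 : ℝ) 1) → f x = 0)
    (hprob : IsProbabilityMeasure
      (volume.withDensity (fun x => ENNReal.ofReal (f x))))
    {Ω : Type*} [MeasurableSpace Ω] (μ : Measure Ω) [IsProbabilityMeasure μ]
    (W : ℕ → Ω → EuclideanSpace ℝ (Fin p)) (hW : ∀ i, Measurable (W i))
    (hiid : iIndepFun W μ)
    (hlaw : ∀ i, Measure.map (W i) μ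
      = volume.withDensity (fun x => ENNReal.ofReal (f x))) :
    Filter.Tendsto
      (fun n : ℕ => μ {ω | W 0 ω ∈
        convexHull ℝ (Set.range (fun i : Fin n => W (i + 1 : ℕ) ω))})
      Filter.atTop (nhds 1) := by
  haveI := hprob
  set ν := volume.withDensity (fun x => ENNReal.ofReal (f x)) with hν
  refine tendsto_order.2 ⟨fun a ha => ?_, fun a ha => Filter.Eventually.of_forall
    (fun n => lt_of_le_of_lt prob_le_one ha)⟩
  -- a < 1; choose ε := (1-a)/2 > 0
  have h1a : (1:ℝ≥0∞) - a ≠ 0 := by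
    simpa [tsub_eq_zero_iff_le] using not_le.2 ha
  set ε : ℝ≥0∞ := (1 - a)/2 with hε
  have hεpos : 0 < ε := ENNReal.half_pos h1a
  obtain ⟨δ, hδ, hδ2, hδν⟩ := inner_choice hp f hf hout hprob hεpos
  set Inn : Set (EuclideanSpace ℝ (Fin p)) :=
    {x | ∀ k, x k ∈ Set.Icc δ (1-δ)} with hInn
  have hInnMeas : MeasurableSet Inn := coordSet_meas _ (fun _ => measurableSet_Icc)
  set q : ℝ≥0∞ := ENNReal.ofReal c * ENNReal.ofReal δ ^ p with hqdef
  have hq0 : q ≠ 0 := by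
    apply mul_ne_zero
    · simpa using ENNReal.ofReal_pos.2 hc |>.ne'
    · exact pow_ne_zero _ (ENNReal.ofReal_pos.2 hδ).ne'
  set r : ℝ≥0∞ := 1 - q with hrdef
  have hr1 : r < 1 := ENNReal.sub_lt_self one_ne_top one_ne_zero hq0
  set C : ℝ≥0∞ := (Fintype.card (Fin p → Bool) : ℝ≥0∞) with hC
  have htend0 : Filter.Tendsto (fun n : ℕ => C * r ^ n) Filter.atTop (nhds 0) := by
    have h := ENNReal.Tendsto.const_mul (a := C)
      (ENNReal.tendsto_pow_atTop_nhds_zero_of_lt_one hr1)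
      (Or.inr (by simp [hC]))
    simpa using h
  filter_upwards [htend0.eventually (Iio_mem_nhds hεpos)] with n hn
  -- the good event
  set G : Set Ω := (W 0 ⁻¹' Inn) ∩
    ⋂ s : Fin p → Bool, {ω | ∃ i : Fin n, W (i+1 : ℕ) ω ∈ Box δ s} with hG
  have hsub : G ⊆ {ω | W 0 ω ∈
      convexHull ℝ (Set.range (fun i : Fin n => W (i + 1 : ℕ) ω))} := by
    rintro ω ⟨h0, hs⟩
    rw [Set.mem_iInter] at hs
    choose idx hidx using hs
    refine convexHull_mono ?_ (hull_lemma p δ hδ hδ2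
      (fun s => W ((idx s : Fin n) + 1 : ℕ) ω) (fun s k => hidx s k) (W 0 ω) h0)
    rintro _ ⟨s, rfl⟩
    exact ⟨idx s, rfl⟩
  -- bound the complement
  have hGc : μ Gᶜ ≤ (1 - ν Inn) + C * r ^ n := by
    have hcompl : Gᶜ ⊆ (W 0 ⁻¹' Innᶜ) ∪
        ⋃ s : Fin p → Bool, {ω | ∀ i : Fin n, W (i+1 : ℕ) ω ∉ Box δ s} := by
      intro ω hω
      rw [hG, Set.compl_inter] at hω
      rcases hω with h | h
      · exact Or.inl h
      · rw [Set.compl_iInter] at h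
        obtain ⟨s, hsω⟩ := Set.mem_iUnion.1 h
        refine Or.inr (Set.mem_iUnion.2 ⟨s, fun i => ?_⟩)
        simp only [Set.mem_compl_iff, Set.mem_setOf_eq, not_exists] at hsω
        exact hsω i
    refine (measure_mono hcompl).trans ((measure_union_le _ _).trans ?_)
    gcongr
    · refine le_of_eq ?_
      rw [← Measure.map_apply (hW 0) hInnMeas.compl, hlaw 0,
        measure_compl hInnMeas (measure_ne_top _ _), measure_univ]
    · refine (measure_iUnion_fintype_le _ _).trans ?_
      have hterm : ∀ s : Fin p → Bool,
          μ {ω | ∀ i : Fin n, W (i+1 : ℕ) ω ∉ Box δ s} ≤ r ^ n := by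
        intro s
        rw [miss_prob μ W hW hiid ν hlaw n (Box δ s) (box_meas δ s)]
        exact pow_le_pow_left' (tsub_le_tsub_left (nu_box f hf hc hlb hδ hδ2 s) 1) n
      calc ∑ s : Fin p → Bool, μ {ω | ∀ i : Fin n, W (i+1 : ℕ) ω ∉ Box δ s}
          ≤ ∑ _s : Fin p → Bool, r ^ n := Finset.sum_le_sum (fun s _ => hterm s)
        _ = C * r ^ n := by rw [Finset.sum_const, Finset.card_univ, nsmul_eq_mul]
  -- conclude
  have hcover : (1:ℝ≥0∞) ≤ μ G + μ Gᶜ := by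
    have := measure_union_le (μ := μ) G Gᶜ
    rwa [Set.union_compl_self, measure_univ] at this
  have hlt : a + μ Gᶜ < 1 := by
    calc a + μ Gᶜ ≤ a + ((1 - ν Inn) + C * r ^ n) := add_le_add_right hGc a
      _ < a + (ε + ε) := by
          refine ENNReal.add_lt_add_left (ne_top_of_lt ha) ?_
          exact ENNReal.add_lt_add hδν hn
      _ = a + (1 - a) := by rw [← ENNReal.add_halves (1 - a)]
      _ = 1 := add_tsub_cancel_of_le ha.le
  have haG : a < μ G := by
    have := lt_of_lt_of_le hlt hcover
    exact (ENNReal.add_lt_add_iff_right (measure_ne_top _ _)).1 this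
  exact haG.trans_le (measure_mono hsub)
end

section
/- For any δ ∈ (0, 1/2), if a finite set S ⊂ [0,1]^p contains at least one point in each of the 2^p closed δ-cube neighborhoods of the vertices of [0,1]^p (i.e., for every vertex v of the cube there is s ∈ S with ‖s - v‖_∞ ≤ δ), then the convex hull of S contains the cube [δ, 1-δ]^p. -/
/-- If a finite set `S ⊆ [0,1]^p` contains a point in each `δ`-cube
neighborhood of every vertex of the unit cube, then its convex hull contains
the inner cube `[δ, 1-δ]^p`. -/
theorem stmt_5 (p : ℕ) (hp : 1 ≤ p) (δ : ℝ) (hδ0 : 0 < δ) (hδ1 : δ < 1 / 2)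
    (S : Finset (EuclideanSpace ℝ (Fin p)))
    (hS : ∀ s ∈ S, ∀ k, s k ∈ Set.Icc (0 : ℝ) 1)
    (hvert : ∀ v : EuclideanSpace ℝ (Fin p), (∀ k, v k = 0 ∨ v k = 1) →
      ∃ s ∈ S, ∀ k, |s k - v k| ≤ δ) :
    {x : EuclideanSpace ℝ (Fin p) | ∀ k, x k ∈ Set.Icc δ (1 - δ)}
      ⊆ convexHull ℝ (S : Set (EuclideanSpace ℝ (Fin p))) := by
  intro x hx
  by_contra hxC
  have hconv : Convex ℝ (convexHull ℝ (S : Set (EuclideanSpace ℝ (Fin p)))) :=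
    convex_convexHull ℝ _
  have hclosed : IsClosed (convexHull ℝ (S : Set (EuclideanSpace ℝ (Fin p)))) :=
    S.finite_toSet.isClosed_convexHull (𝕜 := ℝ)
  obtain ⟨f, u, hfu, hux⟩ := geometric_hahn_banach_closed_point hconv hclosed hxC
  set a : Fin p → ℝ := fun k => f (EuclideanSpace.single k 1) with ha
  set v : EuclideanSpace ℝ (Fin p) := WithLp.toLp 2 (fun k => if 0 ≤ a k then (1:ℝ) else 0) with hv
  obtain ⟨s, hsS, hs⟩ := hvert v (fun k => by
    by_cases h : 0 ≤ a k <;> simp [hv, h])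
  have hdecomp : ∀ y : EuclideanSpace ℝ (Fin p), f y = ∑ k, y k * a k := by
    intro y
    have hy : y = ∑ k, y k • (EuclideanSpace.single k 1 : EuclideanSpace ℝ (Fin p)) := by
      ext j
      have : (∑ k, y k • (EuclideanSpace.single k 1 : EuclideanSpace ℝ (Fin p))) j
          = ∑ k, y k * (if j = k then (1:ℝ) else 0) := by
        rw [WithLp.ofLp_sum, Finset.sum_apply]
        simp [EuclideanSpace.single_apply]
      simp [this]
    conv_lhs => rw [hy]
    rw [map_sum]
    simp [ha, smul_eq_mul]
  have key : f x ≤ f s := by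
    have h1 : f x = ∑ k, x k * a k := hdecomp x
    have h2 : f s = ∑ k, s k * a k := hdecomp s
    have : ∑ k, x k * a k ≤ ∑ k, s k * a k := by
      apply Finset.sum_le_sum
      intro k _
      have hxk := hx k
      have hsk := hs k
      by_cases h : 0 ≤ a k
      · have hvk : v k = 1 := by simp [hv, h]
        rw [hvk] at hsk
        have hs1 : 1 - δ ≤ s k := by
          have := abs_le.mp hsk
          linarith [this.1]
        have : x k ≤ s k := le_trans hxk.2 hs1
        nlinarith
      · have hvk : v k = 0 := by simp [hv, h]
        rw [hvk] at hsk
        have hs1 : s k ≤ δ := by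
          have := abs_le.mp hsk
          simpa using this.2
        have : s k ≤ x k := le_trans hs1 hxk.1
        nlinarith [not_le.mp h]
    linarith
  have := hfu s (subset_convexHull ℝ _ hsS)
  linarith
end

section
/- Let X be a random variable taking values in [0,1], R_B = E[min(X, 1-X)], and R = E[2 min(X,1-X)(1 - min(X,1-X))]. Then R = 2 R_B (1 - R_B) - 2 Var(min(X, 1-X)), and consequently R_B ≤ R ≤ 2 R_B (1 - R_B). -/
open MeasureTheory ProbabilityTheory

/-- Cover–Hart-type bound: with `R_B = E[min(X,1-X)]` and
`R = E[2 min(X,1-X)(1-min(X,1-X))]`, one has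
`R = 2R_B(1-R_B) - 2 Var(min(X,1-X))` and `R_B ≤ R ≤ 2R_B(1-R_B)`. -/
theorem stmt_12 {Ω : Type*} [MeasurableSpace Ω]
    (μ : Measure Ω) [IsProbabilityMeasure μ]
    (X : Ω → ℝ) (hX : Measurable X) (hX01 : ∀ ω, X ω ∈ Set.Icc (0 : ℝ) 1) :
    (∫ ω, 2 * min (X ω) (1 - X ω) * (1 - min (X ω) (1 - X ω)) ∂μ
        = 2 * (∫ ω, min (X ω) (1 - X ω) ∂μ)
            * (1 - ∫ ω, min (X ω) (1 - X ω) ∂μ)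
          - 2 * variance (fun ω => min (X ω) (1 - X ω)) μ)
    ∧ (∫ ω, min (X ω) (1 - X ω) ∂μ)
        ≤ ∫ ω, 2 * min (X ω) (1 - X ω) * (1 - min (X ω) (1 - X ω)) ∂μ
    ∧ ∫ ω, 2 * min (X ω) (1 - X ω) * (1 - min (X ω) (1 - X ω)) ∂μ
        ≤ 2 * (∫ ω, min (X ω) (1 - X ω) ∂μ)
            * (1 - ∫ ω, min (X ω) (1 - X ω) ∂μ) := by
  set Y : Ω → ℝ := fun ω => min (X ω) (1 - X ω) with hY
  have hYmeas : Measurable Y := hX.min (measurable_const.sub hX)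
  have hYbd : ∀ ω, Y ω ∈ Set.Icc (0 : ℝ) (1/2) := by
    intro ω
    rcases hX01 ω with ⟨h0, h1⟩
    constructor
    · exact le_min h0 (by linarith)
    · rcases le_total (X ω) (1 - X ω) with h | h
      · rw [hY]; simp only [min_eq_left h]; linarith
      · rw [hY]; simp only [min_eq_right h]; linarith
  have hYb : ∀ ω, |Y ω| ≤ 1/2 := fun ω => by
    rcases hYbd ω with ⟨h0, h1⟩; rw [abs_le]; constructor <;> linarith
  have hmem : MemLp Y 2 μ :=
    memLp_of_bounded (Filter.Eventually.of_forall hYbd) hYmeas.aestronglyMeasurable 2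
  have hIntY : Integrable Y μ := hmem.integrable (by norm_num)
  have hIntY2 : Integrable (fun ω => Y ω ^ 2) μ := hmem.integrable_sq
  have hvar : variance Y μ = (∫ ω, Y ω ^ 2 ∂μ) - (∫ ω, Y ω ∂μ) ^ 2 := by
    rw [variance_eq_sub hmem]; rfl
  have hexp : (∫ ω, 2 * Y ω * (1 - Y ω) ∂μ)
      = 2 * (∫ ω, Y ω ∂μ) - 2 * (∫ ω, Y ω ^ 2 ∂μ) := by
    have : (fun ω => 2 * Y ω * (1 - Y ω)) = fun ω => 2 * Y ω - 2 * Y ω ^ 2 := by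
      funext ω; ring
    rw [this, integral_sub (hIntY.const_mul 2) (hIntY2.const_mul 2),
      integral_const_mul, integral_const_mul]
  have hmain : (∫ ω, 2 * Y ω * (1 - Y ω) ∂μ)
      = 2 * (∫ ω, Y ω ∂μ) * (1 - ∫ ω, Y ω ∂μ) - 2 * variance Y μ := by
    rw [hexp, hvar]; ring
  refine ⟨hmain, ?_, ?_⟩
  · apply integral_mono hIntY
    · have : (fun ω => 2 * Y ω * (1 - Y ω)) = fun ω => 2 * Y ω - 2 * Y ω ^ 2 := by
        funext ω; ring
      rw [this]; exact (hIntY.const_mul 2).sub (hIntY2.const_mul 2)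
    · intro ω
      rcases hYbd ω with ⟨h0, h1⟩
      show Y ω ≤ 2 * Y ω * (1 - Y ω)
      nlinarith [mul_nonneg h0 (by linarith : (0:ℝ) ≤ 1 - 2 * Y ω)]
  · rw [hmain]
    have := variance_nonneg Y μ
    linarith
end
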